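/- If X and Y are independent real random variables each converging weakly to standard Gaussians after normalization, i.e. (X_n − a_n)/s_n ⇒ N(0,1) and (Y_n − b_n)/t_n ⇒ N(0,1) with X_n, Y_n independent, then (X_n − Y_n − (a_n − b_n))/√(s_n² + t_n²) ⇒ N(0,1), provided s_n/√(s_n²+t_n²) converges to some c ∈ [0,1]. -/

import Mathlib

open Filter MeasureTheory ProbabilityTheory
open scoped NNReal ENNReal Real

noncomputable def stdNormalCDF (t : ℝ) : ℝ :=
  ((gaussianReal 0 1) (Set.Iic t)).toReal

namespace StdNormalAux

local notation "Φ" => stdNormalCDF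
local notation "γ" => gaussianReal 0 1



lemma phi_eq_cdf : stdNormalCDF = cdf (gaussianReal 0 1) := by
  funext u; rw [cdf_eq_real]; rfl

lemma phi_mono : Monotone Φ := by rw [phi_eq_cdf]; exact monotone_cdf _
lemma phi_nonneg (x : ℝ) : 0 ≤ Φ x := by rw [phi_eq_cdf]; exact cdf_nonneg _ x
lemma phi_le_one (x : ℝ) : Φ x ≤ 1 := by rw [phi_eq_cdf]; exact cdf_le_one _ x
lemma phi_atBot : Tendsto Φ atBot (nhds 0) := by rw [phi_eq_cdf]; exact tendsto_cdf_atBot _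
lemma phi_atTop : Tendsto Φ atTop (nhds 1) := by rw [phi_eq_cdf]; exact tendsto_cdf_atTop _

lemma gaussianPDFReal_le_one (x : ℝ) : gaussianPDFReal 0 1 x ≤ 1 := by
  rw [gaussianPDFReal]
  have h1 : (1:ℝ) ≤ Real.sqrt (2 * Real.pi * (1:ℝ≥0)) := by
    rw [NNReal.coe_one, mul_one]
    nlinarith [Real.sq_sqrt (by positivity : (0:ℝ) ≤ 2 * Real.pi), Real.pi_gt_three,
      Real.sqrt_nonneg (2 * Real.pi)]
  have h2 : Real.exp (-(x - 0)^2 / (2 * (1:ℝ≥0))) ≤ 1 := by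
    rw [Real.exp_le_one_iff]
    rw [NNReal.coe_one, mul_one]
    have h : (0:ℝ) ≤ (x - 0)^2 := sq_nonneg _
    apply div_nonpos_of_nonpos_of_nonneg <;> nlinarith
  calc (Real.sqrt (2 * Real.pi * (1:ℝ≥0)))⁻¹ * Real.exp (-(x - 0)^2 / (2 * (1:ℝ≥0)))
      ≤ 1 * 1 := by
        apply mul_le_mul _ h2 (Real.exp_nonneg _) (by norm_num)
        exact inv_le_one_of_one_le₀ h1
    _ = 1 := by norm_num

lemma gaussianPDF_le_one (x : ℝ) : gaussianPDF 0 1 x ≤ 1 := by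
  rw [gaussianPDF]
  exact ENNReal.ofReal_le_one.2 (gaussianPDFReal_le_one x)

lemma phi_sub_phi {x y : ℝ} (h : x ≤ y) : Φ y - Φ x = (γ (Set.Ioc x y)).toReal := by
  have hsplit : γ (Set.Iic x) + γ (Set.Ioc x y) = γ (Set.Iic y) := by
    rw [← measure_union (Set.Iic_disjoint_Ioc le_rfl) measurableSet_Ioc,
      Set.Iic_union_Ioc_eq_Iic h]
  have := congrArg ENNReal.toReal hsplit
  rw [ENNReal.toReal_add (measure_ne_top _ _) (measure_ne_top _ _)] at this
  simp only [stdNormalCDF]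
  linarith

lemma gamma_Ioc_le {x y : ℝ} : γ (Set.Ioc x y) ≤ ENNReal.ofReal (y - x) := by
  rw [gaussianReal_apply 0 one_ne_zero]
  calc ∫⁻ a in Set.Ioc x y, gaussianPDF 0 1 a ≤ ∫⁻ _ in Set.Ioc x y, 1 :=
        setLIntegral_mono measurable_const (fun a _ => gaussianPDF_le_one a)
    _ = volume (Set.Ioc x y) := by rw [setLIntegral_one]
    _ = ENNReal.ofReal (y - x) := Real.volume_Ioc

lemma phi_lipschitz {x y : ℝ} (h : x ≤ y) : Φ y - Φ x ≤ y - x := by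
  rw [phi_sub_phi h]
  calc (γ (Set.Ioc x y)).toReal ≤ (ENNReal.ofReal (y - x)).toReal :=
        ENNReal.toReal_mono (by simp) gamma_Ioc_le
    _ = y - x := ENNReal.toReal_ofReal (by linarith)

lemma phi_neg (y : ℝ) : Φ (-y) = 1 - Φ y := by
  have hmap : Measure.map (fun x : ℝ => -x) γ = γ := by
    have := gaussianReal_map_const_mul (μ := 0) (v := 1) (-1)
    simp only [neg_one_mul, mul_zero] at this
    convert this using 2
    ext
    norm_num
  have hsing : γ {y} = 0 :=
    gaussianReal_absolutelyContinuous 0 one_ne_zero (by simp)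
  have h1 : γ (Set.Iic (-y)) = γ (Set.Ici y) := by
    conv_lhs => rw [← hmap]
    rw [Measure.map_apply measurable_neg measurableSet_Iic]
    congr 1
    ext x
    simp [le_neg]
  have hIio : γ (Set.Iio y) = γ (Set.Iic y) := by
    rw [← Set.Iio_union_right, measure_union (by simp) (measurableSet_singleton y), hsing,
      add_zero]
  have h2 : γ (Set.Iio y) + γ (Set.Ici y) = 1 := by
    rw [← measure_union ?_ measurableSet_Ici]
    · rw [Set.Iio_union_Ici]; exact measure_univ
    · rw [Set.disjoint_left]; intro z hz hz'
      exact absurd (Set.mem_Iio.1 hz) (not_lt.2 hz')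
  have h3 := congrArg ENNReal.toReal h2
  rw [ENNReal.toReal_add (measure_ne_top _ _) (measure_ne_top _ _)] at h3
  simp only [ENNReal.toReal_one] at h3
  simp only [stdNormalCDF]
  rw [h1, ← hIio]
  linarith



noncomputable def ρ : ℝ × ℝ → ℝ≥0∞ := fun p => gaussianPDF 0 1 p.1 * gaussianPDF 0 1 p.2

lemma measurable_rho : Measurable ρ :=
  ((measurable_gaussianPDF 0 1).comp measurable_fst).mul
    ((measurable_gaussianPDF 0 1).comp measurable_snd)

lemma prod_dens : (gaussianReal 0 1).prod (gaussianReal 0 1)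
    = ((volume : Measure ℝ).prod volume).withDensity ρ := by
  have h1 : gaussianReal 0 1 = volume.withDensity (gaussianPDF 0 1) :=
    gaussianReal_of_var_ne_zero 0 one_ne_zero
  refine Measure.prod_eq fun s t hs ht => ?_
  rw [withDensity_apply _ (hs.prod ht), ← Measure.prod_restrict]
  simp only [ρ]
  rw [lintegral_prod_mul ((measurable_gaussianPDF 0 1).aemeasurable)
      ((measurable_gaussianPDF 0 1).aemeasurable)]
  rw [h1, withDensity_apply _ hs, withDensity_apply _ ht]

lemma rho_invariant {c d : ℝ} (hcd : c^2 + d^2 = 1) (p : ℝ × ℝ) :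
    ρ (c * p.1 + d * p.2, c * p.2 - d * p.1) = ρ p := by
  obtain ⟨x, y⟩ := p
  simp only [ρ, gaussianPDF]
  rw [← ENNReal.ofReal_mul (gaussianPDFReal_nonneg _ _ _),
    ← ENNReal.ofReal_mul (gaussianPDFReal_nonneg _ _ _)]
  congr 1
  simp only [gaussianPDFReal, NNReal.coe_one, mul_one]
  have h2 : ∀ a b : ℝ, (Real.sqrt (2*Real.pi))⁻¹ * Real.exp a
      * ((Real.sqrt (2*Real.pi))⁻¹ * Real.exp b)
      = (Real.sqrt (2*Real.pi))⁻¹ * (Real.sqrt (2*Real.pi))⁻¹ * Real.exp (a+b) := by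
    intro a b; rw [Real.exp_add]; ring
  rw [h2, h2]
  congr 1
  rw [Real.exp_eq_exp]
  linear_combination (-((x:ℝ)^2 + y^2)/2) * hcd

lemma map_T {c d : ℝ} (hc : c ≠ 0) (hcd : c^2 + d^2 = 1) :
    MeasurePreserving (fun p : ℝ × ℝ => (c * p.1 + d * p.2, c * p.2 - d * p.1))
      ((volume : Measure ℝ).prod volume) ((volume : Measure ℝ).prod volume) := by
  set k := d / c with hk
  have mS : MeasurePreserving (fun q : ℝ × ℝ => (q.1, q.2 + k * q.1))
      ((volume : Measure ℝ).prod volume) ((volume : Measure ℝ).prod volume) := by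
    have h := MeasurePreserving.skew_product (μa := (volume : Measure ℝ))
      (μb := (volume : Measure ℝ)) (μc := (volume : Measure ℝ)) (μd := (volume : Measure ℝ))
      (f := id) (g := fun a y => y + k * a)
      (MeasurePreserving.id _)
      (measurable_snd.add (measurable_fst.const_mul k))
      (ae_of_all _ fun a => (measurePreserving_add_right volume (k * a)).map_eq)
    exact h
  have mA1 : MeasurePreserving (fun p : ℝ × ℝ => (p.1 + k * p.2, p.2))
      ((volume : Measure ℝ).prod volume) ((volume : Measure ℝ).prod volume) := by
    have hswap : MeasurePreserving (Prod.swap : ℝ × ℝ → ℝ × ℝ)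
        ((volume : Measure ℝ).prod volume) ((volume : Measure ℝ).prod volume) :=
      MeasureTheory.Measure.measurePreserving_swap
    exact hswap.comp (mS.comp hswap)
  have hA2m : Measurable (fun p : ℝ × ℝ => (c * p.1, p.2 / c)) :=
    (measurable_fst.const_mul c).prodMk (measurable_snd.div_const c)
  have mA2 : MeasurePreserving (fun p : ℝ × ℝ => (c * p.1, p.2 / c))
      ((volume : Measure ℝ).prod volume) ((volume : Measure ℝ).prod volume) := by
    refine ⟨hA2m, (Measure.prod_eq fun s t hs ht => ?_).symm⟩
    rw [Measure.map_apply hA2m (hs.prod ht)]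
    have hpre : (fun p : ℝ × ℝ => (c * p.1, p.2 / c)) ⁻¹' (s ×ˢ t)
        = ((fun x => c * x) ⁻¹' s) ×ˢ ((fun y => y * c⁻¹) ⁻¹' t) := by
      ext p; simp [Set.mem_prod, div_eq_mul_inv]
    rw [hpre, Measure.prod_prod, Real.volume_preimage_mul_left hc,
      Real.volume_preimage_mul_right (inv_ne_zero hc), inv_inv]
    rw [mul_mul_mul_comm, ← ENNReal.ofReal_mul (abs_nonneg _), abs_inv,
      inv_mul_cancel₀ (by simpa using hc)]
    simp
  have mA3 : MeasurePreserving (fun q : ℝ × ℝ => (q.1, q.2 - k * q.1))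
      ((volume : Measure ℝ).prod volume) ((volume : Measure ℝ).prod volume) := by
    have h := MeasurePreserving.skew_product (μa := (volume : Measure ℝ))
      (μb := (volume : Measure ℝ)) (μc := (volume : Measure ℝ)) (μd := (volume : Measure ℝ))
      (f := id) (g := fun a y => y - k * a)
      (MeasurePreserving.id _)
      (measurable_snd.sub (measurable_fst.const_mul k))
      (ae_of_all _ fun a => by
        simpa [sub_eq_add_neg] using (measurePreserving_add_right volume (-(k * a))).map_eq)
    exact h
  have hcomp : (fun p : ℝ × ℝ => (c * p.1 + d * p.2, c * p.2 - d * p.1))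
      = (fun q : ℝ × ℝ => (q.1, q.2 - k * q.1)) ∘ (fun p : ℝ × ℝ => (c * p.1, p.2 / c))
        ∘ (fun p : ℝ × ℝ => (p.1 + k * p.2, p.2)) := by
    funext p
    simp only [Function.comp_apply, Prod.mk.injEq, hk]
    constructor
    · field_simp
    · field_simp
      linear_combination p.2 * hcd
  rw [hcomp]
  exact mA3.comp (mA2.comp mA1)

lemma gauss_rot {c d : ℝ} (hc : c ≠ 0) (hcd : c^2 + d^2 = 1) (u : ℝ) :
    ((gaussianReal 0 1).prod (gaussianReal 0 1)) {p : ℝ × ℝ | c * p.1 + d * p.2 ≤ u}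
      = gaussianReal 0 1 (Set.Iic u) := by
  set T : ℝ × ℝ → ℝ × ℝ := fun p => (c * p.1 + d * p.2, c * p.2 - d * p.1) with hT
  have hTm : Measurable T :=
    ((measurable_fst.const_mul c).add (measurable_snd.const_mul d)).prodMk
      ((measurable_snd.const_mul c).sub (measurable_fst.const_mul d))
  have hB : MeasurableSet (Set.Iic u ×ˢ (Set.univ : Set ℝ)) :=
    measurableSet_Iic.prod MeasurableSet.univ
  have hset : {p : ℝ × ℝ | c * p.1 + d * p.2 ≤ u} = T ⁻¹' (Set.Iic u ×ˢ Set.univ) := by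
    ext p; simp [hT]
  rw [prod_dens, hset, withDensity_apply _ (hTm hB)]
  have hcongr : ∀ p ∈ T ⁻¹' (Set.Iic u ×ˢ Set.univ), ρ p = ρ (T p) := fun p _ =>
    (rho_invariant hcd p).symm
  rw [setLIntegral_congr_fun_ae (hTm hB) (ae_of_all _ hcongr)]
  rw [← setLIntegral_map hB measurable_rho hTm, (map_T hc hcd).map_eq]
  rw [← withDensity_apply _ hB, ← prod_dens, Measure.prod_prod, measure_univ, mul_one]




lemma exists_mem_Ioc {x : ℕ → ℝ} : ∀ (k : ℕ) {w : ℝ}, w ∈ Set.Ioc (x 0) (x k) →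
    ∃ j < k, w ∈ Set.Ioc (x j) (x (j + 1)) := by
  intro k
  induction k with
  | zero => intro w hw; exact absurd hw.2 (not_le.2 hw.1)
  | succ k ih =>
    intro w hw
    by_cases h : w ≤ x k
    · obtain ⟨j, hj, hj2⟩ := ih ⟨hw.1, h⟩
      exact ⟨j, Nat.lt_succ_of_lt hj, hj2⟩
    · exact ⟨k, Nat.lt_succ_self k, ⟨not_le.1 h, hw.2⟩⟩

lemma Ioc_disj {x : ℕ → ℝ} (hm : Monotone x) {i j : ℕ} (hij : i ≠ j) :
    Disjoint (Set.Ioc (x i) (x (i + 1))) (Set.Ioc (x j) (x (j + 1))) := by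
  wlog h : i < j generalizing i j
  · exact (this hij.symm (hij.lt_or_gt.resolve_left h)).symm
  rw [Set.disjoint_left]
  intro w hw hw'
  have h1 : x (i + 1) ≤ x j := hm h
  have := hw.2
  have := hw'.1
  linarith

lemma prod_approx {A B g D δ : ℝ} (hA0 : 0 ≤ A) (hA1 : A ≤ 1) (hD0 : 0 ≤ D) (hD1 : D ≤ 1)
    (h1 : |A - g| ≤ δ) (h2 : |B - D| ≤ 2 * δ) : |A * B - g * D| ≤ 3 * δ := by
  have key : A * B - g * D = A * (B - D) + (A - g) * D := by ring
  have hδ : 0 ≤ δ := le_trans (abs_nonneg _) h1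
  have e1 : |A * (B - D)| ≤ 2 * δ := by
    rw [abs_mul]
    calc |A| * |B - D| ≤ 1 * (2 * δ) := by
          apply mul_le_mul _ h2 (abs_nonneg _) (by norm_num)
          rw [abs_of_nonneg hA0]; exact hA1
      _ = 2 * δ := by ring
  have e2 : |(A - g) * D| ≤ δ := by
    rw [abs_mul]
    calc |A - g| * |D| ≤ δ * 1 := by
          apply mul_le_mul h1 _ (abs_nonneg _) hδ
          rw [abs_of_nonneg hD0]; exact hD1
      _ = δ := by ring
  calc |A * B - g * D| = |A * (B - D) + (A - g) * D| := by rw [key]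
    _ ≤ |A * (B - D)| + |(A - g) * D| := abs_add_le _ _
    _ ≤ 2 * δ + δ := add_le_add e1 e2
    _ = 3 * δ := by ring

variable {Ω : Type*} [MeasurableSpace Ω] {μ : Measure Ω} [IsProbabilityMeasure μ]

lemma prob_toReal_le_one (s : Set Ω) : (μ s).toReal ≤ 1 := by
  simpa using ENNReal.toReal_mono ENNReal.one_ne_top prob_le_one

lemma meas_Ioc {V : Ω → ℝ} (hm : Measurable V) {a b : ℝ} (hab : a ≤ b) :
    (μ (V ⁻¹' Set.Ioc a b)).toReal
      = (μ (V ⁻¹' Set.Iic b)).toReal - (μ (V ⁻¹' Set.Iic a)).toReal := by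
  have h : μ (V ⁻¹' Set.Iic a) + μ (V ⁻¹' Set.Ioc a b) = μ (V ⁻¹' Set.Iic b) := by
    rw [← measure_union ((Set.Iic_disjoint_Ioc le_rfl).preimage V) (hm measurableSet_Ioc),
      ← Set.preimage_union, Set.Iic_union_Ioc_eq_Iic hab]
  have h2 := congrArg ENNReal.toReal h
  rw [ENNReal.toReal_add (measure_ne_top _ _) (measure_ne_top _ _)] at h2
  linarith

lemma prob_compl_toReal {s : Set Ω} (hs : MeasurableSet s) :
    (μ sᶜ).toReal = 1 - (μ s).toReal := by
  have h : μ s + μ sᶜ = 1 := by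
    rw [← measure_union (disjoint_compl_right) hs.compl, Set.union_compl_self, measure_univ]
  have h2 := congrArg ENNReal.toReal h
  rw [ENNReal.toReal_add (measure_ne_top _ _) (measure_ne_top _ _)] at h2
  simp only [ENNReal.toReal_one] at h2
  linarith

lemma abs_ev {f : ℕ → ℝ} {L : ℝ} (h : Tendsto f atTop (nhds L)) {δ : ℝ} (hδ : 0 < δ) :
    ∀ᶠ n in atTop, |f n - L| < δ := by
  simpa [Real.dist_eq] using Metric.tendsto_nhds.1 h _ hδ

lemma tendsto_moving {F : ℕ → ℝ → ℝ} (hmono : ∀ n, Monotone (F n))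
    (hlim : ∀ y, Tendsto (fun n => F n y) atTop (nhds (Φ y)))
    {y : ℕ → ℝ} {l : ℝ} (hy : Tendsto y atTop (nhds l)) :
    Tendsto (fun n => F n (y n)) atTop (nhds (Φ l)) := by
  refine Metric.tendsto_nhds.2 fun ε hε => ?_
  have hδ : 0 < ε / 3 := by linarith
  filter_upwards [abs_ev hy hδ, abs_ev (hlim (l - ε / 3)) hδ, abs_ev (hlim (l + ε / 3)) hδ]
    with n h1 h2 h3
  rw [abs_lt] at h1 h2 h3
  have hb1 : F n (y n) ≤ F n (l + ε / 3) := (hmono n) (by linarith)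
  have hb2 : F n (l - ε / 3) ≤ F n (y n) := (hmono n) (by linarith)
  have hl1 : Φ (l + ε / 3) - Φ l ≤ ε / 3 := by
    have := phi_lipschitz (x := l) (y := l + ε / 3) (by linarith); linarith
  have hl2 : Φ l - Φ (l - ε / 3) ≤ ε / 3 := by
    have := phi_lipschitz (x := l - ε / 3) (y := l) (by linarith); linarith
  rw [Real.dist_eq, abs_lt]
  constructor <;> linarith

lemma tendsto_lt_cdf {V : ℕ → Ω → ℝ}
    (h : ∀ y, Tendsto (fun n => (μ {ω | V n ω ≤ y}).toReal) atTop (nhds (Φ y))) (x : ℝ) :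
    Tendsto (fun n => (μ {ω | V n ω < x}).toReal) atTop (nhds (Φ x)) := by
  refine Metric.tendsto_nhds.2 fun ε hε => ?_
  have hδ : 0 < ε / 3 := by linarith
  filter_upwards [abs_ev (h (x - ε / 3)) hδ, abs_ev (h x) hδ] with n h1 h2
  rw [abs_lt] at h1 h2
  have hb1 : (μ {ω | V n ω < x}).toReal ≤ (μ {ω | V n ω ≤ x}).toReal :=
    ENNReal.toReal_mono (measure_ne_top _ _)
      (measure_mono fun ω (hω : V n ω < x) => (le_of_lt hω : V n ω ≤ x))
  have hb2 : (μ {ω | V n ω ≤ x - ε / 3}).toReal ≤ (μ {ω | V n ω < x}).toReal :=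
    ENNReal.toReal_mono (measure_ne_top _ _)
      (measure_mono fun ω (hω : V n ω ≤ x - ε / 3) => (lt_of_le_of_lt hω (by linarith) : V n ω < x))
  have hl2 : Φ x - Φ (x - ε / 3) ≤ ε / 3 := by
    have := phi_lipschitz (x := x - ε / 3) (y := x) (by linarith); linarith
  rw [Real.dist_eq, abs_lt]
  constructor <;> linarith

set_option maxHeartbeats 2000000 in
theorem core (μ : Measure Ω) [IsProbabilityMeasure μ]
    (U W : ℕ → Ω → ℝ) (p q : ℕ → ℝ) (c d : ℝ)
    (hmU : ∀ n, Measurable (U n)) (hmW : ∀ n, Measurable (W n))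
    (hq0 : ∀ n, 0 ≤ q n)
    (hind : ∀ n, IndepFun (U n) (W n) μ)
    (hU : ∀ y, Tendsto (fun n => (μ {ω | U n ω ≤ y}).toReal) atTop (nhds (Φ y)))
    (hW : ∀ y, Tendsto (fun n => (μ {ω | W n ω ≤ y}).toReal) atTop (nhds (Φ y)))
    (hp : Tendsto p atTop (nhds c)) (hq : Tendsto q atTop (nhds d))
    (hc : 0 < c) (hd : 0 ≤ d) (hcd : c ^ 2 + d ^ 2 = 1) (u : ℝ) :
    Tendsto (fun n => (μ {ω | p n * U n ω + q n * W n ω ≤ u}).toReal) atTop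
      (nhds (Φ u)) := by
  refine Metric.tendsto_nhds.2 fun ε hε => ?_
  set ε' : ℝ := ε / 8 with hε'def
  have hε' : 0 < ε' := by positivity
  obtain ⟨M₁, hM₁⟩ := eventually_atBot.1 (phi_atBot.eventually_lt_const hε')
  obtain ⟨M₂, hM₂⟩ := eventually_atTop.1 (phi_atTop.eventually_const_lt (by linarith : 1 - ε' < 1))
  set M : ℝ := max 1 (max (-M₁) M₂) with hMdef
  have hM0 : 0 < M := lt_of_lt_of_le one_pos (le_max_left _ _)
  have hMa : Φ (-M) < ε' := hM₁ _ (by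
    have h : -M₁ ≤ M := le_trans (le_max_left _ _) (le_max_right _ _)
    linarith)
  have hMb : 1 - ε' < Φ M := hM₂ _ (le_trans (le_max_right _ _) (le_max_right _ _))
  set k : ℕ := ⌈2 * M / ε'⌉₊ + 1 with hkdef
  have hk0 : 0 < k := Nat.succ_pos _
  have hkR : (0:ℝ) < k := Nat.cast_pos.2 hk0
  have hmesh : 2 * M / k ≤ ε' := by
    rw [div_le_iff₀ hkR]
    have h2 := Nat.le_ceil (2 * M / ε')
    have h3 : ((⌈2 * M / ε'⌉₊ : ℕ) : ℝ) ≤ ((k : ℕ) : ℝ) := Nat.cast_le.2 (Nat.le_succ _)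
    have h1 : 2 * M / ε' ≤ (k : ℝ) := le_trans h2 h3
    calc 2 * M = (2 * M / ε') * ε' := by field_simp
      _ ≤ (k : ℝ) * ε' := mul_le_mul_of_nonneg_right h1 (le_of_lt hε')
      _ = ε' * k := by ring
  set m : ℝ := 2 * M / k with hmdef
  have hm0 : 0 ≤ m := by positivity
  set x : ℕ → ℝ := fun j => -M + j * m with hxdef
  have hx0 : x 0 = -M := by simp [hxdef]
  have hxk : x k = M := by
    simp only [hxdef, hmdef]
    field_simp
    ring
  have hxmono : Monotone x := by
    intro i j hij
    simp only [hxdef]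
    have h : (i:ℝ) ≤ j := Nat.cast_le.2 hij
    nlinarith
  have hxstep : ∀ j : ℕ, x (j + 1) - x j = m := by
    intro j; simp only [hxdef]; push_cast; ring
  set A : ℕ → ℝ := fun j => (u - d * x j) / c with hAdef
  set g : ℕ → ℝ := fun j => Φ (A j) with hgdef
  set Δ : ℕ → ℝ := fun j => Φ (x (j + 1)) - Φ (x j) with hΔdef
  have hΔ0 : ∀ j, 0 ≤ Δ j := fun j => sub_nonneg.2 (phi_mono (hxmono (Nat.le_succ j)))
  have hΔ1 : ∀ j, Δ j ≤ 1 := fun j => by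
    have h1 := phi_le_one (x (j + 1)); have h2 := phi_nonneg (x j)
    simp only [hΔdef]; linarith
  have hΔε : ∀ j, Δ j ≤ ε' := fun j => by
    have h := phi_lipschitz (hxmono (Nat.le_succ j))
    rw [hxstep j] at h
    exact le_trans h hmesh
  have hg0 : ∀ j, 0 ≤ g j := fun j => phi_nonneg _
  have hg1 : ∀ j, g j ≤ 1 := fun j => phi_le_one _
  have hgmono : ∀ j, g (j + 1) ≤ g j := by
    intro j
    apply phi_mono
    simp only [hAdef]
    rw [div_le_div_iff_of_pos_right hc]
    have h := hxmono (Nat.le_succ j)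
    nlinarith
  set Sp : ℝ := ∑ j ∈ Finset.range k, Δ j * g j with hSp
  set Sm : ℝ := ∑ j ∈ Finset.range k, Δ j * g (j + 1) with hSm
  have hSdiff : Sp ≤ Sm + ε' := by
    have h1 : Sp - Sm = ∑ j ∈ Finset.range k, Δ j * (g j - g (j + 1)) := by
      rw [hSp, hSm, ← Finset.sum_sub_distrib]
      exact Finset.sum_congr rfl fun j _ => by ring
    have h2 : ∑ j ∈ Finset.range k, Δ j * (g j - g (j + 1))
        ≤ ∑ j ∈ Finset.range k, ε' * (g j - g (j + 1)) :=
      Finset.sum_le_sum fun j _ =>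
        mul_le_mul_of_nonneg_right (hΔε j) (by have := hgmono j; linarith)
    have h3 : ∑ j ∈ Finset.range k, ε' * (g j - g (j + 1)) = ε' * (g 0 - g k) := by
      rw [← Finset.mul_sum, Finset.sum_range_sub']
    have h4 : g 0 - g k ≤ 1 := by have := hg1 0; have := hg0 k; linarith
    have h5 : ε' * (g 0 - g k) ≤ ε' * 1 := mul_le_mul_of_nonneg_left h4 (le_of_lt hε')
    linarith
  -- measure-level identities
  have hrot : (((gaussianReal 0 1).prod (gaussianReal 0 1))
      {p : ℝ × ℝ | c * p.1 + d * p.2 ≤ u}).toReal = Φ u := by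
    rw [gauss_rot (ne_of_gt hc) hcd u]; rfl
  have hrectd : ∀ B : ℕ → ℝ, Set.PairwiseDisjoint (↑(Finset.range k))
      (fun j => Set.Iic (B j) ×ˢ Set.Ioc (x j) (x (j + 1))) := by
    intro B i _ j _ hij
    exact Disjoint.mono (fun pp hpp => hpp.2) (fun pp hpp => hpp.2)
      ((Ioc_disj hxmono hij).preimage Prod.snd)
  have hsum : ∀ B : ℕ → ℝ,
      ∑ j ∈ Finset.range k, (γ (Set.Iic (B j))).toReal * Δ j
      = (((gaussianReal 0 1).prod (gaussianReal 0 1))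
          (⋃ j ∈ Finset.range k, Set.Iic (B j) ×ˢ Set.Ioc (x j) (x (j + 1)))).toReal := by
    intro B
    rw [measure_biUnion_finset (hrectd B) (fun j _ => measurableSet_Iic.prod measurableSet_Ioc),
      ENNReal.toReal_sum (fun j _ => measure_ne_top _ _)]
    refine Finset.sum_congr rfl fun j hj => ?_
    rw [Measure.prod_prod, ENNReal.toReal_mul]
    congr 1
    simp only [hΔdef]
    exact phi_sub_phi (hxmono (Nat.le_succ j))
  have hSmle : Sm ≤ Φ u := by
    have h1 : Sm = ∑ j ∈ Finset.range k, (γ (Set.Iic (A (j + 1)))).toReal * Δ j :=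
      Finset.sum_congr rfl fun j _ => by rw [mul_comm]; rfl
    rw [h1, hsum (fun j => A (j + 1)), ← hrot]
    refine ENNReal.toReal_mono (measure_ne_top _ _) (measure_mono ?_)
    intro pp hpp
    simp only [Set.mem_iUnion] at hpp
    obtain ⟨j, hj, h1', h2'⟩ := hpp
    simp only [Set.mem_setOf_eq]
    rw [Set.mem_Iic] at h1'
    rw [hAdef, le_div_iff₀ hc] at h1'
    have h3 : d * pp.2 ≤ d * x (j + 1) := mul_le_mul_of_nonneg_left h2'.2 hd
    linarith
  have hSple : Φ u - 2 * ε' ≤ Sp := by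
    have h1 : Sp = (((gaussianReal 0 1).prod (gaussianReal 0 1))
        (⋃ j ∈ Finset.range k, Set.Iic (A j) ×ˢ Set.Ioc (x j) (x (j + 1)))).toReal := by
      rw [hSp, ← hsum A]
      exact Finset.sum_congr rfl fun j _ => by rw [mul_comm]; rfl
    have hincl : {p : ℝ × ℝ | c * p.1 + d * p.2 ≤ u} ⊆
        (⋃ j ∈ Finset.range k, Set.Iic (A j) ×ˢ Set.Ioc (x j) (x (j + 1)))
        ∪ ((Set.univ ×ˢ Set.Iic (-M)) ∪ (Set.univ ×ˢ Set.Ioi M)) := by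
      intro pp hpp
      simp only [Set.mem_setOf_eq] at hpp
      by_cases hw1 : pp.2 ≤ -M
      · exact Or.inr (Or.inl ⟨Set.mem_univ _, hw1⟩)
      by_cases hw2 : M < pp.2
      · exact Or.inr (Or.inr ⟨Set.mem_univ _, hw2⟩)
      · left
        have hwIoc : pp.2 ∈ Set.Ioc (x 0) (x k) := by
          rw [hx0, hxk]; exact ⟨not_le.1 hw1, not_lt.1 hw2⟩
        obtain ⟨j, hj, hjm⟩ := exists_mem_Ioc k hwIoc
        refine Set.mem_iUnion.2 ⟨j, Set.mem_iUnion.2 ⟨Finset.mem_range.2 hj, ⟨?_, hjm⟩⟩⟩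
        rw [Set.mem_Iic, hAdef, le_div_iff₀ hc]
        have h3 : d * x j ≤ d * pp.2 := mul_le_mul_of_nonneg_left (le_of_lt hjm.1) hd
        linarith
    have h2 : ((gaussianReal 0 1).prod (gaussianReal 0 1))
          {p : ℝ × ℝ | c * p.1 + d * p.2 ≤ u}
        ≤ ((gaussianReal 0 1).prod (gaussianReal 0 1))
            (⋃ j ∈ Finset.range k, Set.Iic (A j) ×ˢ Set.Ioc (x j) (x (j + 1)))
          + (((gaussianReal 0 1).prod (gaussianReal 0 1)) (Set.univ ×ˢ Set.Iic (-M))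
            + ((gaussianReal 0 1).prod (gaussianReal 0 1)) (Set.univ ×ˢ Set.Ioi M)) := by
      refine le_trans (measure_mono hincl) (le_trans (measure_union_le _ _) ?_)
      gcongr
      exact measure_union_le _ _
    have hb1 : (((gaussianReal 0 1).prod (gaussianReal 0 1))
        (Set.univ ×ˢ Set.Iic (-M))).toReal = Φ (-M) := by
      rw [Measure.prod_prod, measure_univ, one_mul]; rfl
    have hb2 : (((gaussianReal 0 1).prod (gaussianReal 0 1))
        (Set.univ ×ˢ Set.Ioi M)).toReal = 1 - Φ M := by
      rw [Measure.prod_prod, measure_univ, one_mul, ← Set.compl_Iic,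
        prob_compl_toReal measurableSet_Iic]
      rfl
    have h3 := ENNReal.toReal_mono
      (ENNReal.add_ne_top.2 ⟨measure_ne_top _ _,
        ENNReal.add_ne_top.2 ⟨measure_ne_top _ _, measure_ne_top _ _⟩⟩) h2
    rw [ENNReal.toReal_add (measure_ne_top _ _)
        (ENNReal.add_ne_top.2 ⟨measure_ne_top _ _, measure_ne_top _ _⟩),
      ENNReal.toReal_add (measure_ne_top _ _) (measure_ne_top _ _), hrot, hb1, hb2] at h3
    rw [h1]
    linarith
  -- δ and eventual estimates
  set δ : ℝ := ε' / (3 * k) with hδdef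
  have hδ0 : 0 < δ := by positivity
  have h3kδ : 3 * (k:ℝ) * δ = ε' := by rw [hδdef]; field_simp
  have hδε' : δ ≤ ε' := by
    have hk1 : (1:ℝ) ≤ (k:ℝ) := by exact_mod_cast hk0
    rw [hδdef, div_le_iff₀ (by positivity)]
    nlinarith
  have hFUmono : ∀ n, Monotone (fun y => (μ {ω | U n ω ≤ y}).toReal) := fun n y z hyz =>
    ENNReal.toReal_mono (measure_ne_top _ _)
      (measure_mono fun ω (hω : U n ω ≤ y) => (le_trans hω hyz : U n ω ≤ z))
  have hUmov : ∀ j : ℕ, Tendsto (fun n => (μ {ω | U n ω ≤ (u - q n * x j) / p n}).toReal)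
      atTop (nhds (g j)) := by
    intro j
    have hy : Tendsto (fun n => (u - q n * x j) / p n) atTop (nhds (A j)) := by
      simp only [hAdef]
      exact Tendsto.div (tendsto_const_nhds.sub (hq.mul_const (x j))) hp (ne_of_gt hc)
    exact tendsto_moving hFUmono hU hy
  have evp : ∀ᶠ n in atTop, 0 < p n := hp.eventually (eventually_gt_nhds hc)
  have evW : ∀ᶠ n in atTop, ∀ j ∈ Finset.range (k + 1),
      |(μ {ω | W n ω ≤ x j}).toReal - Φ (x j)| < δ :=
    (Filter.eventually_all_finset _).2 fun j _ => abs_ev (hW (x j)) hδ0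
  have evU : ∀ᶠ n in atTop, ∀ j ∈ Finset.range (k + 1),
      |(μ {ω | U n ω ≤ (u - q n * x j) / p n}).toReal - g j| < δ :=
    (Filter.eventually_all_finset _).2 fun j _ => abs_ev (hUmov j) hδ0
  filter_upwards [evp, evW, evU] with n hpn hWn hUn
  -- notation for this n
  have hUW : ∀ i j : ℕ, (μ (U n ⁻¹' Set.Iic ((u - q n * x i) / p n)
        ∩ W n ⁻¹' Set.Ioc (x j) (x (j + 1)))).toReal
      = (μ {ω | U n ω ≤ (u - q n * x i) / p n}).toReal
        * ((μ {ω | W n ω ≤ x (j + 1)}).toReal - (μ {ω | W n ω ≤ x j}).toReal) := by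
    intro i j
    rw [(hind n).measure_inter_preimage_eq_mul _ _ measurableSet_Iic measurableSet_Ioc,
      ENNReal.toReal_mul, meas_Ioc (hmW n) (hxmono (Nat.le_succ j))]
    rfl
  -- upper bound
  have hinclU : {ω | p n * U n ω + q n * W n ω ≤ u} ⊆ (W n ⁻¹' Set.Iic (-M))
      ∪ ((W n ⁻¹' Set.Ioi M)
        ∪ ⋃ j ∈ Finset.range k, (U n ⁻¹' Set.Iic ((u - q n * x j) / p n)
            ∩ W n ⁻¹' Set.Ioc (x j) (x (j + 1)))) := by
    intro ω hω
    have hE : p n * U n ω + q n * W n ω ≤ u := hω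
    by_cases hw1 : W n ω ≤ -M
    · exact Or.inl hw1
    by_cases hw2 : M < W n ω
    · exact Or.inr (Or.inl hw2)
    · right; right
      have hwIoc : W n ω ∈ Set.Ioc (x 0) (x k) := by
        rw [hx0, hxk]; exact ⟨not_le.1 hw1, not_lt.1 hw2⟩
      obtain ⟨j, hj, hjm⟩ := exists_mem_Ioc k hwIoc
      refine Set.mem_biUnion (Finset.mem_range.2 hj) ⟨?_, hjm⟩
      rw [Set.mem_preimage, Set.mem_Iic, le_div_iff₀ hpn]
      have hqx : q n * x j ≤ q n * W n ω := mul_le_mul_of_nonneg_left (le_of_lt hjm.1) (hq0 n)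
      linarith
  have hup1 : μ {ω | p n * U n ω + q n * W n ω ≤ u} ≤ μ (W n ⁻¹' Set.Iic (-M))
      + (μ (W n ⁻¹' Set.Ioi M)
        + ∑ j ∈ Finset.range k, μ (U n ⁻¹' Set.Iic ((u - q n * x j) / p n)
            ∩ W n ⁻¹' Set.Ioc (x j) (x (j + 1)))) := by
    refine le_trans (measure_mono hinclU) (le_trans (measure_union_le _ _) ?_)
    gcongr
    refine le_trans (measure_union_le _ _) ?_
    gcongr
    exact measure_biUnion_finset_le _ _
  have hsum_ne : (∑ j ∈ Finset.range k, μ (U n ⁻¹' Set.Iic ((u - q n * x j) / p n)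
      ∩ W n ⁻¹' Set.Ioc (x j) (x (j + 1)))) ≠ ⊤ :=
    (ENNReal.sum_lt_top.2 fun j _ => measure_lt_top _ _).ne
  have hupR : (μ {ω | p n * U n ω + q n * W n ω ≤ u}).toReal
      ≤ (μ {ω | W n ω ≤ -M}).toReal + ((1 - (μ {ω | W n ω ≤ M}).toReal)
        + ∑ j ∈ Finset.range k, (μ (U n ⁻¹' Set.Iic ((u - q n * x j) / p n)
            ∩ W n ⁻¹' Set.Ioc (x j) (x (j + 1)))).toReal) := by
    have h3 := ENNReal.toReal_mono
      (ENNReal.add_ne_top.2 ⟨measure_ne_top _ _,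
        ENNReal.add_ne_top.2 ⟨measure_ne_top _ _, hsum_ne⟩⟩) hup1
    rw [ENNReal.toReal_add (measure_ne_top _ _)
        (ENNReal.add_ne_top.2 ⟨measure_ne_top _ _, hsum_ne⟩),
      ENNReal.toReal_add (measure_ne_top _ _) hsum_ne,
      ENNReal.toReal_sum (fun j _ => measure_ne_top _ _)] at h3
    have e1 : (μ (W n ⁻¹' Set.Iic (-M))).toReal = (μ {ω | W n ω ≤ -M}).toReal := rfl
    have e2 : (μ (W n ⁻¹' Set.Ioi M)).toReal = 1 - (μ {ω | W n ω ≤ M}).toReal := by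
      rw [← Set.compl_Iic, Set.preimage_compl, prob_compl_toReal ((hmW n) measurableSet_Iic)]
      rfl
    rw [e1, e2] at h3
    exact h3
  -- lower bound
  have hinclL : (⋃ j ∈ Finset.range k, (U n ⁻¹' Set.Iic ((u - q n * x (j + 1)) / p n)
      ∩ W n ⁻¹' Set.Ioc (x j) (x (j + 1)))) ⊆ {ω | p n * U n ω + q n * W n ω ≤ u} := by
    intro ω hω
    rw [Set.mem_iUnion] at hω
    obtain ⟨j, hj⟩ := hω
    rw [Set.mem_iUnion] at hj
    obtain ⟨hjk, hUω, hWω⟩ := hj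
    show p n * U n ω + q n * W n ω ≤ u
    rw [Set.mem_preimage, Set.mem_Iic, le_div_iff₀ hpn] at hUω
    have h2 : q n * W n ω ≤ q n * x (j + 1) := mul_le_mul_of_nonneg_left hWω.2 (hq0 n)
    linarith
  have hdisj : Set.PairwiseDisjoint (↑(Finset.range k))
      (fun j => U n ⁻¹' Set.Iic ((u - q n * x (j + 1)) / p n)
        ∩ W n ⁻¹' Set.Ioc (x j) (x (j + 1))) := by
    intro i _ j _ hij
    exact Disjoint.mono Set.inter_subset_right Set.inter_subset_right
      ((Ioc_disj hxmono hij).preimage (W n))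
  have hloR : ∑ j ∈ Finset.range k, (μ (U n ⁻¹' Set.Iic ((u - q n * x (j + 1)) / p n)
      ∩ W n ⁻¹' Set.Ioc (x j) (x (j + 1)))).toReal
      ≤ (μ {ω | p n * U n ω + q n * W n ω ≤ u}).toReal := by
    rw [← ENNReal.toReal_sum (fun j _ => measure_ne_top _ _),
      ← measure_biUnion_finset hdisj
        (fun j _ => ((hmU n) measurableSet_Iic).inter ((hmW n) measurableSet_Ioc))]
    exact ENNReal.toReal_mono (measure_ne_top _ _) (measure_mono hinclL)
  -- per-term approximations
  have hterm : ∀ (i : ℕ), i ∈ Finset.range (k + 1) → ∀ (j : ℕ), j ∈ Finset.range k →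
      |(μ {ω | U n ω ≤ (u - q n * x i) / p n}).toReal
        * ((μ {ω | W n ω ≤ x (j + 1)}).toReal - (μ {ω | W n ω ≤ x j}).toReal)
        - g i * Δ j| ≤ 3 * δ := by
    intro i hi j hj
    have hjk1 : j ∈ Finset.range (k + 1) := by
      rw [Finset.mem_range] at hj ⊢; omega
    have hjk2 : j + 1 ∈ Finset.range (k + 1) := by
      rw [Finset.mem_range] at hj ⊢; omega
    refine prod_approx ENNReal.toReal_nonneg (prob_toReal_le_one _) (hΔ0 j) (hΔ1 j)
      (le_of_lt (hUn i hi)) ?_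
    have ha := hWn (j + 1) hjk2
    have hb := hWn j hjk1
    have hkey : (μ {ω | W n ω ≤ x (j + 1)}).toReal - (μ {ω | W n ω ≤ x j}).toReal - Δ j
        = ((μ {ω | W n ω ≤ x (j + 1)}).toReal - Φ (x (j + 1)))
          - ((μ {ω | W n ω ≤ x j}).toReal - Φ (x j)) := by
      simp only [hΔdef]; ring
    rw [hkey]
    rw [abs_lt] at ha hb
    rw [abs_le]
    constructor <;> linarith
  -- sum bounds
  have hsum_up : ∑ j ∈ Finset.range k, (μ (U n ⁻¹' Set.Iic ((u - q n * x j) / p n)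
      ∩ W n ⁻¹' Set.Ioc (x j) (x (j + 1)))).toReal ≤ Sp + ε' := by
    have h1 : ∑ j ∈ Finset.range k, (μ (U n ⁻¹' Set.Iic ((u - q n * x j) / p n)
        ∩ W n ⁻¹' Set.Ioc (x j) (x (j + 1)))).toReal
        ≤ ∑ j ∈ Finset.range k, (g j * Δ j + 3 * δ) := by
      refine Finset.sum_le_sum fun j hj => ?_
      rw [hUW j j]
      have hjr : j ∈ Finset.range (k + 1) := by rw [Finset.mem_range] at hj ⊢; omega
      have := hterm j hjr j hj
      rw [abs_le] at this
      linarith [this.2]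
    rw [Finset.sum_add_distrib, Finset.sum_const, Finset.card_range, nsmul_eq_mul] at h1
    have h2 : ∑ j ∈ Finset.range k, g j * Δ j = Sp :=
      Finset.sum_congr rfl fun j _ => by ring
    rw [h2] at h1
    have h3 : (k:ℝ) * (3 * δ) = ε' := by rw [← h3kδ]; ring
    linarith
  have hsum_lo : Sm - ε' ≤ ∑ j ∈ Finset.range k,
      (μ (U n ⁻¹' Set.Iic ((u - q n * x (j + 1)) / p n)
        ∩ W n ⁻¹' Set.Ioc (x j) (x (j + 1)))).toReal := by
    have h1 : ∑ j ∈ Finset.range k, (g (j + 1) * Δ j - 3 * δ)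
        ≤ ∑ j ∈ Finset.range k, (μ (U n ⁻¹' Set.Iic ((u - q n * x (j + 1)) / p n)
          ∩ W n ⁻¹' Set.Ioc (x j) (x (j + 1)))).toReal := by
      refine Finset.sum_le_sum fun j hj => ?_
      rw [hUW (j + 1) j]
      have hjr : j + 1 ∈ Finset.range (k + 1) := by rw [Finset.mem_range] at hj ⊢; omega
      have := hterm (j + 1) hjr j hj
      rw [abs_le] at this
      linarith [this.1]
    rw [Finset.sum_sub_distrib, Finset.sum_const, Finset.card_range, nsmul_eq_mul] at h1
    have h2 : ∑ j ∈ Finset.range k, g (j + 1) * Δ j = Sm :=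
      Finset.sum_congr rfl fun j _ => by ring
    rw [h2] at h1
    have h3 : (k:ℝ) * (3 * δ) = ε' := by rw [← h3kδ]; ring
    linarith
  -- endpoint CDF bounds
  have h0mem : (0:ℕ) ∈ Finset.range (k + 1) := Finset.mem_range.2 (Nat.succ_pos k)
  have hkmem : k ∈ Finset.range (k + 1) := Finset.mem_range.2 (Nat.lt_succ_self k)
  have hW0 := hWn 0 h0mem
  have hWk := hWn k hkmem
  rw [hx0] at hW0
  rw [hxk] at hWk
  rw [abs_lt] at hW0 hWk
  rw [Real.dist_eq, abs_lt]
  constructor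
  · have := hloR
    have := hsum_lo
    have := hSdiff
    have := hSple
    linarith
  · have := hupR
    have := hsum_up
    have := hSmle
    have := hSdiff
    linarith [hW0.1, hW0.2, hWk.1, hWk.2, hMa, hMb, hδε']


end StdNormalAux

open StdNormalAux

set_option maxHeartbeats 1000000 in
theorem diff_of_asymptotically_gaussian {Ω : Type*} [MeasurableSpace Ω]
    (μ : Measure Ω) [IsProbabilityMeasure μ]
    (X Y : ℕ → Ω → ℝ) (a b s t : ℕ → ℝ) (c : ℝ)
    (hmX : ∀ n, Measurable (X n)) (hmY : ∀ n, Measurable (Y n))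
    (hs : ∀ n, 0 < s n) (ht : ∀ n, 0 < t n)
    (hindep : ∀ n, IndepFun (X n) (Y n) μ)
    (hX : ∀ u : ℝ, Tendsto (fun n => (μ {ω | (X n ω - a n) / s n ≤ u}).toReal)
      atTop (nhds (stdNormalCDF u)))
    (hY : ∀ u : ℝ, Tendsto (fun n => (μ {ω | (Y n ω - b n) / t n ≤ u}).toReal)
      atTop (nhds (stdNormalCDF u)))
    (hc : Tendsto (fun n => s n / Real.sqrt ((s n)^2 + (t n)^2)) atTop (nhds c))
    (hc01 : c ∈ Set.Icc (0:ℝ) 1) :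
    ∀ u : ℝ, Tendsto (fun n =>
        (μ {ω | (X n ω - Y n ω - (a n - b n)) / Real.sqrt ((s n)^2 + (t n)^2) ≤ u}).toReal)
      atTop (nhds (stdNormalCDF u)) := by
  intro u
  have hr : ∀ n, 0 < Real.sqrt ((s n)^2 + (t n)^2) :=
    fun n => Real.sqrt_pos.2 (add_pos (pow_pos (hs n) 2) (pow_pos (ht n) 2))
  have hrsq : ∀ n, Real.sqrt ((s n)^2 + (t n)^2) ^ 2 = (s n)^2 + (t n)^2 :=
    fun n => Real.sq_sqrt (by positivity)
  have hp0 : ∀ n, 0 < s n / Real.sqrt ((s n)^2 + (t n)^2) := fun n => div_pos (hs n) (hr n)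
  have hq0 : ∀ n, 0 < t n / Real.sqrt ((s n)^2 + (t n)^2) := fun n => div_pos (ht n) (hr n)
  have hmU : ∀ n, Measurable (fun ω => (X n ω - a n) / s n) :=
    fun n => ((hmX n).sub_const _).div_const _
  have hmW : ∀ n, Measurable (fun ω => (b n - Y n ω) / t n) :=
    fun n => (measurable_const.sub (hmY n)).div_const _
  have hind : ∀ n, IndepFun (fun ω => (X n ω - a n) / s n) (fun ω => (b n - Y n ω) / t n) μ := by
    intro n
    exact (hindep n).comp ((measurable_id.sub_const (a n)).div_const (s n))
      ((measurable_const.sub measurable_id).div_const (t n))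
  have hWlim : ∀ y : ℝ, Tendsto (fun n => (μ {ω | (b n - Y n ω) / t n ≤ y}).toReal)
      atTop (nhds (stdNormalCDF y)) := by
    intro y
    have hmV : ∀ n, Measurable (fun ω => (Y n ω - b n) / t n) :=
      fun n => ((hmY n).sub_const _).div_const _
    have hset : ∀ n, {ω | (b n - Y n ω) / t n ≤ y} = {ω | (Y n ω - b n) / t n < -y}ᶜ := by
      intro n
      ext ω
      simp only [Set.mem_setOf_eq, Set.mem_compl_iff, not_lt]
      rw [div_le_iff₀ (ht n), le_div_iff₀ (ht n)]
      constructor <;> intro h <;> linarith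
    have h1 : Tendsto (fun n => (μ {ω | (Y n ω - b n) / t n < -y}).toReal)
        atTop (nhds (stdNormalCDF (-y))) := tendsto_lt_cdf hY (-y)
    have h2 : Tendsto (fun n => 1 - (μ {ω | (Y n ω - b n) / t n < -y}).toReal)
        atTop (nhds (1 - stdNormalCDF (-y))) := tendsto_const_nhds.sub h1
    have h3 : 1 - stdNormalCDF (-y) = stdNormalCDF y := by rw [phi_neg]; ring
    rw [h3] at h2
    refine Tendsto.congr (fun n => ?_) h2
    rw [hset n, prob_compl_toReal (s := {ω | (Y n ω - b n) / t n < -y})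
      ((hmV n) measurableSet_Iio)]
  have hcoeff : ∀ n, (s n / Real.sqrt ((s n)^2 + (t n)^2))^2
      + (t n / Real.sqrt ((s n)^2 + (t n)^2))^2 = 1 := by
    intro n
    have hne : (s n)^2 + (t n)^2 ≠ 0 :=
      ne_of_gt (add_pos (pow_pos (hs n) 2) (pow_pos (ht n) 2))
    rw [div_pow, div_pow, hrsq n]
    field_simp
  have hq2 : ∀ n, t n / Real.sqrt ((s n)^2 + (t n)^2)
      = Real.sqrt (1 - (s n / Real.sqrt ((s n)^2 + (t n)^2))^2) := by
    intro n
    rw [show (1:ℝ) - (s n / Real.sqrt ((s n)^2 + (t n)^2))^2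
        = (t n / Real.sqrt ((s n)^2 + (t n)^2))^2 from by have := hcoeff n; linarith,
      Real.sqrt_sq (le_of_lt (hq0 n))]
  have hqlim : Tendsto (fun n => t n / Real.sqrt ((s n)^2 + (t n)^2)) atTop
      (nhds (Real.sqrt (1 - c^2))) := by
    have h1 : Tendsto (fun n => 1 - (s n / Real.sqrt ((s n)^2 + (t n)^2))^2) atTop
        (nhds (1 - c^2)) := tendsto_const_nhds.sub (hc.pow 2)
    have h2 := (Real.continuous_sqrt.tendsto _).comp h1
    exact Tendsto.congr (fun n => (hq2 n).symm) h2
  have hc2 : c^2 ≤ 1 := by nlinarith [hc01.1, hc01.2]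
  have hcd : (Real.sqrt (1 - c^2))^2 = 1 - c^2 := Real.sq_sqrt (by linarith)
  have hevent : ∀ n, {ω | (X n ω - Y n ω - (a n - b n)) / Real.sqrt ((s n)^2 + (t n)^2) ≤ u}
      = {ω | (s n / Real.sqrt ((s n)^2 + (t n)^2)) * ((X n ω - a n) / s n)
          + (t n / Real.sqrt ((s n)^2 + (t n)^2)) * ((b n - Y n ω) / t n) ≤ u} := by
    intro n
    ext ω
    simp only [Set.mem_setOf_eq]
    have heq : (s n / Real.sqrt ((s n)^2 + (t n)^2)) * ((X n ω - a n) / s n)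
        + (t n / Real.sqrt ((s n)^2 + (t n)^2)) * ((b n - Y n ω) / t n)
        = (X n ω - Y n ω - (a n - b n)) / Real.sqrt ((s n)^2 + (t n)^2) := by
      have h1 : s n ≠ 0 := ne_of_gt (hs n)
      have h2 : t n ≠ 0 := ne_of_gt (ht n)
      have h3 : Real.sqrt ((s n)^2 + (t n)^2) ≠ 0 := ne_of_gt (hr n)
      field_simp
      ring
    rw [heq]
  rcases lt_or_eq_of_le hc01.1 with hcpos | hczero
  · have hmain := core μ (fun n ω => (X n ω - a n) / s n) (fun n ω => (b n - Y n ω) / t n)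
      (fun n => s n / Real.sqrt ((s n)^2 + (t n)^2))
      (fun n => t n / Real.sqrt ((s n)^2 + (t n)^2)) c (Real.sqrt (1 - c^2))
      hmU hmW (fun n => le_of_lt (hq0 n)) hind hX hWlim hc hqlim hcpos
      (Real.sqrt_nonneg _) (by rw [hcd]; ring) u
    refine Tendsto.congr (fun n => ?_) hmain
    rw [← hevent n]
  · have hd1 : Real.sqrt (1 - c^2) = 1 := by rw [← hczero]; norm_num
    have hmain := core μ (fun n ω => (b n - Y n ω) / t n) (fun n ω => (X n ω - a n) / s n)
      (fun n => t n / Real.sqrt ((s n)^2 + (t n)^2))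
      (fun n => s n / Real.sqrt ((s n)^2 + (t n)^2)) (Real.sqrt (1 - c^2)) c
      hmW hmU (fun n => le_of_lt (hp0 n)) (fun n => (hind n).symm) hWlim hX hqlim hc
      (by rw [hd1]; norm_num) hc01.1 (by rw [hcd]; ring) u
    refine Tendsto.congr (fun n => ?_) hmain
    have hsets : {ω | (t n / Real.sqrt ((s n)^2 + (t n)^2)) * ((b n - Y n ω) / t n)
          + (s n / Real.sqrt ((s n)^2 + (t n)^2)) * ((X n ω - a n) / s n) ≤ u}
        = {ω | (X n ω - Y n ω - (a n - b n)) / Real.sqrt ((s n)^2 + (t n)^2) ≤ u} := by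
      rw [hevent n]
      ext ω
      simp only [Set.mem_setOf_eq]
      constructor <;> intro h <;> linarith
    rw [hsets]
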